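/- arXiv:2111.03330 — 3 statements merged into one kernel-verified Lean document; each statement's English description precedes it below -/
import Mathlib

section
/- The probability that the Erdős–Rényi random graph G(n, 1/4) has a non-identity automorphism tends to 0 as n → ∞; equivalently, G(n,1/4) is asymmetric with high probability. -/
open MeasureTheory Filter
open scoped ENNReal NNReal

abbrev EdgeIdx (n : ℕ) := {e : Sym2 (Fin n) // ¬ e.IsDiag}

noncomputable def erMeasure (n : ℕ) : Measure (EdgeIdx n → Bool) :=
  Measure.pi fun _ => (PMF.bernoulli (1/4) (by simp)).toMeasure


def graphOf {n : ℕ} (ω : EdgeIdx n → Bool) : SimpleGraph (Fin n) where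
  Adj u v := ∃ h : u ≠ v, ω ⟨s(u,v), fun hd => h (Sym2.mk_isDiag_iff.mp hd)⟩ = true
  symm := by
    constructor
    rintro u v ⟨h, hw⟩
    refine ⟨h.symm, ?_⟩
    have he : (⟨s(v,u), fun hd => h.symm (Sym2.mk_isDiag_iff.mp hd)⟩ : EdgeIdx n)
        = ⟨s(u,v), fun hd => h (Sym2.mk_isDiag_iff.mp hd)⟩ := Subtype.ext (Sym2.eq_swap)
    rw [he]; exact hw
  loopless := by constructor; rintro v ⟨h, _⟩; exact h rfl

noncomputable def bern : Measure Bool := (PMF.bernoulli (1/4) (by simp)).toMeasure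

instance : IsProbabilityMeasure bern := PMF.toMeasure.isProbabilityMeasure _

lemma bern_singleton (x : Bool) : bern {x} = cond x (1/4) (3/4) := by
  rw [bern, PMF.toMeasure_apply_singleton _ _ (measurableSet_singleton x),
    PMF.bernoulli_apply]
  have hsub : (1:ℝ≥0∞) - 1/4 = 3/4 := by
    refine ENNReal.sub_eq_of_eq_add (by norm_num) ?_
    rw [ENNReal.div_add_div_same]
    norm_num
    exact (ENNReal.div_self (by norm_num) (by norm_num)).symm
  cases x
  · simp only [cond_false]; rw [← hsub, ENNReal.coe_sub, ENNReal.coe_one, ENNReal.coe_div (by norm_num)]; simp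
  · simp only [cond_true]; rw [ENNReal.coe_div (by norm_num)]; norm_num

-- cylinder lemma
lemma cyl_measure {n : ℕ} {κ : Type} [Fintype κ] [DecidableEq κ]
    (g : κ → EdgeIdx n) (hg : Function.Injective g) (t : κ → Bool) :
    erMeasure n {ω | ∀ k, ω (g k) = t k} = ∏ k, bern {t k} := by
  classical
  have hset : {ω : EdgeIdx n → Bool | ∀ k, ω (g k) = t k}
      = Set.pi Set.univ (fun i => {b | ∀ k, g k = i → b = t k}) := by
    ext ω
    simp only [Set.mem_setOf_eq, Set.mem_pi, Set.mem_univ, forall_true_left]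
    constructor
    · rintro h i k rfl; exact h k
    · intro h k; exact h (g k) k rfl
  rw [hset, erMeasure, Measure.pi_pi]
  show ∏ i, bern {b | ∀ k, g k = i → b = t k} = ∏ k, bern {t k}
  have h2 : ∀ i ∈ Finset.univ, i ∉ Finset.univ.image g →
      bern {b | ∀ k, g k = i → b = t k} = 1 := by
    intro i _ hi
    have : {b | ∀ k, g k = i → b = t k} = Set.univ := by
      ext b
      simp only [Set.mem_setOf_eq, Set.mem_univ, iff_true]
      intro k hk
      exact absurd (Finset.mem_image.mpr ⟨k, Finset.mem_univ k, hk⟩) hi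
    rw [this]
    exact measure_univ
  calc ∏ i, bern {b | ∀ k, g k = i → b = t k}
      = ∏ i ∈ Finset.univ.image g, bern {b | ∀ k, g k = i → b = t k} :=
        (Finset.prod_subset (Finset.subset_univ _) h2).symm
    _ = ∏ k, bern {b | ∀ k', g k' = g k → b = t k'} :=
        Finset.prod_image (fun a _ b _ h => hg h)
    _ = ∏ k, bern {t k} := by
        refine Finset.prod_congr rfl fun k _ => ?_
        congr 1
        ext b
        simp only [Set.mem_setOf_eq, Set.mem_singleton_iff]
        constructor
        · intro h; exact h k rfl
        · intro h k' hk'; rw [h, hg hk']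

lemma pair_event_measure {n : ℕ} {κ : Type} [Fintype κ] [DecidableEq κ]
    (a b : κ → EdgeIdx n) (hinj : Function.Injective (Sum.elim a b)) :
    erMeasure n {ω | ∀ k, ω (a k) = ω (b k)} = (5/8) ^ (Fintype.card κ) := by
  classical
  -- decompose the event as a disjoint union over c : κ → Bool
  have hE : {ω : EdgeIdx n → Bool | ∀ k, ω (a k) = ω (b k)}
      = ⋃ c ∈ (Finset.univ : Finset (κ → Bool)),
          {ω : EdgeIdx n → Bool | ∀ k : κ ⊕ κ, ω (Sum.elim a b k) = Sum.elim c c k} := by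
    ext ω
    simp only [Set.mem_setOf_eq, Set.mem_iUnion, Finset.mem_univ, exists_true_left]
    constructor
    · intro h
      refine ⟨fun k => ω (a k), ?_⟩
      rintro (k | k)
      · rfl
      · exact (h k).symm
    · rintro ⟨c, hc⟩ k
      have h1 := hc (Sum.inl k)
      have h2 := hc (Sum.inr k)
      simp only [Sum.elim_inl, Sum.elim_inr] at h1 h2
      rw [h1, h2]
  rw [hE, measure_biUnion_finset]
  · have hterm : ∀ c : κ → Bool,
        erMeasure n {ω : EdgeIdx n → Bool | ∀ k : κ ⊕ κ, ω (Sum.elim a b k) = Sum.elim c c k}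
          = ∏ k : κ, (bern {c k} * bern {c k}) := by
      intro c
      rw [cyl_measure _ hinj]
      rw [Fintype.prod_sum_type]
      simp only [Sum.elim_inl, Sum.elim_inr]
      rw [← Finset.prod_mul_distrib]
    simp only [hterm]
    have hps := Finset.prod_univ_sum (fun _ : κ => (Finset.univ : Finset Bool))
      (fun k b => bern {b} * bern {b})
    rw [Fintype.piFinset_univ] at hps
    rw [← hps]
    have : ∀ k : κ, (∑ x : Bool, bern {x} * bern {x}) = 5/8 := by
      intro _
      rw [Fintype.sum_bool]
      rw [bern_singleton, bern_singleton]
      show (1:ℝ≥0∞)/4 * (1/4) + 3/4 * (3/4) = 5/8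
      have h4 : ((1:ℝ≥0∞)/4) = ((1/4 : ℝ≥0) : ℝ≥0∞) := by
        rw [ENNReal.coe_div (by norm_num)]; norm_num
      have h34 : ((3:ℝ≥0∞)/4) = ((3/4 : ℝ≥0) : ℝ≥0∞) := by
        rw [ENNReal.coe_div (by norm_num)]; norm_num
      have h58 : ((5:ℝ≥0∞)/8) = ((5/8 : ℝ≥0) : ℝ≥0∞) := by
        rw [ENNReal.coe_div (by norm_num)]; norm_num
      rw [h4, h34, h58, ← ENNReal.coe_mul, ← ENNReal.coe_mul, ← ENNReal.coe_add, ENNReal.coe_inj]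
      ext; push_cast; norm_num
    rw [Finset.prod_congr rfl fun k _ => this k, Finset.prod_const, Finset.card_univ]
  · intro c _ c' _ hcc'
    simp only [Function.onFun]
    rw [Set.disjoint_left]
    rintro ω h1 h2
    apply hcc'
    funext k
    have e1 := h1 (Sum.inl k)
    have e2 := h2 (Sum.inl k)
    simp only [Sum.elim_inl] at e1 e2
    rw [← e1, ← e2]
  · intro c _
    have : {ω : EdgeIdx n → Bool | ∀ k : κ ⊕ κ, ω (Sum.elim a b k) = Sum.elim c c k}
        = ⋂ k : κ ⊕ κ, (fun ω : EdgeIdx n → Bool => ω (Sum.elim a b k)) ⁻¹' {Sum.elim c c k} := by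
      ext ω
      simp [Set.mem_iInter]
    rw [this]
    exact MeasurableSet.iInter fun k => (measurable_pi_apply _) (measurableSet_singleton _)

/-- The permutation induced on edge indices by a vertex permutation. -/
def edgePerm {n : ℕ} (f : Equiv.Perm (Fin n)) : Equiv.Perm (EdgeIdx n) where
  toFun e := ⟨Sym2.map f e.1, fun hd => e.2 ((Sym2.isDiag_map f.injective).mp hd)⟩
  invFun e := ⟨Sym2.map f.symm e.1, fun hd => e.2 ((Sym2.isDiag_map f.symm.injective).mp hd)⟩
  left_inv e := by
    apply Subtype.ext
    simp only [Sym2.map_map]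
    have : (⇑f.symm ∘ ⇑f) = id := by funext x; simp
    rw [this, Sym2.map_id]; rfl
  right_inv e := by
    apply Subtype.ext
    simp only [Sym2.map_map]
    have : (⇑f ∘ ⇑f.symm) = id := by funext x; simp
    rw [this, Sym2.map_id]; rfl

lemma edgePerm_mk {n : ℕ} (f : Equiv.Perm (Fin n)) (u v : Fin n) (h : ¬ (s(u,v) : Sym2 (Fin n)).IsDiag) :
    edgePerm f ⟨s(u,v), h⟩
      = ⟨s(f u, f v), fun hd => h (Sym2.mk_isDiag_iff.mpr (f.injective (Sym2.mk_isDiag_iff.mp hd)))⟩ := by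
  apply Subtype.ext
  simp [edgePerm, Sym2.map_pair_eq]

/-- Greedy selection of an "independent" subset for a permutation. -/
lemma greedy {α : Type*} [DecidableEq α] (σ : Equiv.Perm α) :
    ∀ (A : Finset α), (∀ e ∈ A, σ e ≠ e) →
    ∃ D : Finset α, D ⊆ A ∧ (∀ e ∈ D, ∀ e' ∈ D, σ e ≠ e') ∧ A.card ≤ 3 * D.card := by
  intro A
  induction A using Finset.strongInduction with
  | _ A ih =>
    intro hA
    rcases A.eq_empty_or_nonempty with rfl | ⟨e, he⟩
    · exact ⟨∅, Finset.Subset.refl _, by simp, by simp⟩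
    · have hsub : (A \ {e, σ e, σ.symm e}) ⊆ A := Finset.sdiff_subset
      set A' := A \ {e, σ e, σ.symm e} with hA'
      have hem : ∀ x, x ∈ A' ↔ x ∈ A ∧ ¬(x = e ∨ x = σ e ∨ x = σ.symm e) := by
        intro x
        simp [hA', Finset.mem_sdiff]
      have henot : e ∉ A' := by
        rw [hem]; tauto
      have hssub : A' ⊂ A := Finset.ssubset_iff_of_subset hsub |>.mpr ⟨e, he, henot⟩
      obtain ⟨D', hD'sub, hD'ind, hD'card⟩ := ih A' hssub (fun x hx => hA x (hsub hx))
      refine ⟨insert e D', ?_, ?_, ?_⟩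
      · intro x hx
        rcases Finset.mem_insert.mp hx with rfl | hx
        · exact he
        · exact hsub (hD'sub hx)
      · intro x hx y hy
        rcases Finset.mem_insert.mp hx with hxe | hx
        · rcases Finset.mem_insert.mp hy with hye | hy
          · rw [hxe, hye]
            exact hA e he
          · rw [hxe]
            have h5 := (hem y).mp (hD'sub hy)
            exact fun hcon => h5.2 (Or.inr (Or.inl hcon.symm))
        · rcases Finset.mem_insert.mp hy with hye | hy
          · have hx' := (hem x).mp (hD'sub hx)
            intro hcon
            have h6 : x = σ.symm e := by rw [← hye, ← hcon]; simp
            exact hx'.2 (Or.inr (Or.inr h6))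
          · exact hD'ind x hx y hy
      · have heD' : e ∉ D' := fun hcon => henot (hD'sub hcon)
        rw [Finset.card_insert_of_notMem heD']
        have hcover : A ⊆ A' ∪ {e, σ e, σ.symm e} := by
          intro x hx
          rw [Finset.mem_union, hem]
          by_cases hc : x = e ∨ x = σ e ∨ x = σ.symm e
          · right; simpa using hc
          · left; exact ⟨hx, hc⟩
        have h1 : A.card ≤ A'.card + 3 := by
          calc A.card ≤ (A' ∪ {e, σ e, σ.symm e}).card := Finset.card_le_card hcover
            _ ≤ A'.card + ({e, σ e, σ.symm e} : Finset α).card := Finset.card_union_le _ _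
            _ ≤ A'.card + 3 := by
                have h3 : ({e, σ e, σ.symm e} : Finset α).card ≤ 3 :=
                  (Finset.card_insert_le _ _).trans (by
                    have h4 := Finset.card_insert_le (σ e) ({σ.symm e} : Finset α)
                    simp at h4 ⊢
                    omega)
                omega
        omega

lemma nonfixed_count {n : ℕ} (f : Equiv.Perm (Fin n)) :
    f.support.card * (n - 2)
      ≤ 2 * (Finset.univ.filter (fun e : EdgeIdx n => edgePerm f e ≠ e)).card := by
  classical
  set N' : Finset (Sym2 (Fin n)) :=
    Finset.univ.filter (fun e => ¬ e.IsDiag ∧ Sym2.map f e ≠ e) with hN'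
  have hcard : (Finset.univ.filter (fun e : EdgeIdx n => edgePerm f e ≠ e)).card = N'.card := by
    apply Finset.card_bij (fun (e : EdgeIdx n) _ => e.1)
    · intro e he
      rw [hN', Finset.mem_filter]
      refine ⟨Finset.mem_univ _, e.2, ?_⟩
      intro hcon
      have : edgePerm f e = e := Subtype.ext hcon
      exact (Finset.mem_filter.mp he).2 this
    · intro e _ e' _ h
      exact Subtype.ext h
    · intro e' he'
      rw [hN', Finset.mem_filter] at he'
      refine ⟨⟨e', he'.2.1⟩, ?_, rfl⟩
      rw [Finset.mem_filter]
      refine ⟨Finset.mem_univ _, ?_⟩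
      intro hcon
      exact he'.2.2 (congrArg Subtype.val hcon)
  rw [hcard]
  set P : Finset (Fin n × Fin n) :=
    (f.support ×ˢ Finset.univ).filter
      (fun p => p.1 ≠ p.2 ∧ Sym2.map f s(p.1, p.2) ≠ s(p.1, p.2)) with hP
  have hlow : f.support.card * (n - 2) ≤ P.card := by
    rw [Finset.card_eq_sum_card_fiberwise
      (f := fun p : Fin n × Fin n => p.1) (t := f.support)
      (fun p hp => (Finset.mem_product.mp (Finset.mem_filter.mp hp).1).1)]
    rw [← Finset.sum_const_nat (m := n - 2) (fun u hu => rfl)]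
    refine Finset.sum_le_sum fun u hu => ?_
    have hfu : f u ≠ u := Equiv.Perm.mem_support.mp hu
    have hsub2 : ({u} ×ˢ (Finset.univ \ {u, f u})) ⊆ P.filter (fun p => p.1 = u) := by
      intro p hp
      rw [Finset.mem_product, Finset.mem_singleton, Finset.mem_sdiff] at hp
      obtain ⟨hp1, _, hp2⟩ := hp
      simp only [Finset.mem_insert, Finset.mem_singleton, not_or] at hp2
      rw [Finset.mem_filter, hP, Finset.mem_filter, Finset.mem_product]
      refine ⟨⟨⟨by rw [hp1]; exact hu, Finset.mem_univ _⟩, ?_, ?_⟩, hp1⟩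
      · rw [hp1]; exact fun hcon => hp2.1 hcon.symm
      · rw [hp1]
        rw [Sym2.map_pair_eq]
        intro hcon
        rcases Sym2.eq_iff.mp hcon with ⟨h1, _⟩ | ⟨h1, _⟩
        · exact hfu h1
        · exact hp2.2 h1.symm
    have hle2 : n - 2 ≤ ({u} ×ˢ (Finset.univ \ {u, f u})).card := by
      rw [Finset.card_product, Finset.card_singleton, one_mul,
        Finset.card_sdiff_of_subset (Finset.subset_univ _), Finset.card_univ, Fintype.card_fin]
      have h2 : ({u, f u} : Finset (Fin n)).card ≤ 2 := by
        apply (Finset.card_insert_le _ _).trans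
        simp
      omega
    exact hle2.trans (Finset.card_le_card hsub2)
  have hupp : P.card ≤ 2 * N'.card := by
    have himg : P.image (fun p : Fin n × Fin n => (s(p.1, p.2) : Sym2 (Fin n))) ⊆ N' := by
      intro a ha
      rw [Finset.mem_image] at ha
      obtain ⟨p, hp, rfl⟩ := ha
      rw [hP, Finset.mem_filter] at hp
      rw [hN', Finset.mem_filter]
      exact ⟨Finset.mem_univ _, fun hd => hp.2.1 (Sym2.mk_isDiag_iff.mp hd), hp.2.2⟩
    have hP2 : P.card ≤ 2 * (P.image (fun p : Fin n × Fin n => (s(p.1, p.2) : Sym2 (Fin n)))).card := by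
      apply Finset.card_le_mul_card_image
      intro a ha
      rw [Finset.mem_image] at ha
      obtain ⟨p0, hp0, rfl⟩ := ha
      have hss : (P.filter fun p : Fin n × Fin n => (s(p.1, p.2) : Sym2 (Fin n)) = s(p0.1, p0.2))
          ⊆ {p0, (p0.2, p0.1)} := by
        intro p hp
        rw [Finset.mem_filter] at hp
        rcases Sym2.eq_iff.mp hp.2 with ⟨h1, h2⟩ | ⟨h1, h2⟩
        · exact Finset.mem_insert.mpr (Or.inl (Prod.ext h1 h2))
        · refine Finset.mem_insert.mpr (Or.inr ?_)
          rw [Finset.mem_singleton]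
          exact Prod.ext h1 h2
      apply (Finset.card_le_card hss).trans
      apply (Finset.card_insert_le _ _).trans
      simp
    exact hP2.trans (by
      have := Finset.card_le_card himg
      omega)
  omega

lemma aut_measure_le {n : ℕ} (f : Equiv.Perm (Fin n)) :
    erMeasure n {ω : EdgeIdx n → Bool |
        ∀ u v, (graphOf ω).Adj (f u) (f v) ↔ (graphOf ω).Adj u v}
      ≤ (5/8 : ℝ≥0∞) ^ (f.support.card * ((n-2)/6)) := by
  classical
  set σ := edgePerm f with hσ
  set A : Finset (EdgeIdx n) := Finset.univ.filter (fun e => σ e ≠ e) with hA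
  obtain ⟨D, hDA, hind, hcard3⟩ := greedy σ A (fun e he => (Finset.mem_filter.mp he).2)
  set a : {e // e ∈ D} → EdgeIdx n := fun k => k.1 with ha
  set b : {e // e ∈ D} → EdgeIdx n := fun k => σ k.1 with hb
  have hinj : Function.Injective (Sum.elim a b) := by
    rintro (k | k) (k' | k') h <;> simp only [Sum.elim_inl, Sum.elim_inr, ha, hb] at h
    · exact congrArg Sum.inl (Subtype.ext h)
    · exact absurd h.symm (hind k'.1 k'.2 k.1 k.2)
    · exact absurd h (hind k.1 k.2 k'.1 k'.2)
    · exact congrArg Sum.inr (Subtype.ext (σ.injective h))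
  have hsubset : {ω : EdgeIdx n → Bool |
        ∀ u v, (graphOf ω).Adj (f u) (f v) ↔ (graphOf ω).Adj u v}
      ⊆ {ω : EdgeIdx n → Bool | ∀ k, ω (a k) = ω (b k)} := by
    intro ω hω
    have key : ∀ e : EdgeIdx n, ω e = ω (σ e) := by
      have H : ∀ u v (hE : ¬ (s(u,v) : Sym2 (Fin n)).IsDiag),
          ω ⟨s(u,v), hE⟩ = ω (σ ⟨s(u,v), hE⟩) := by
        intro u v hE
        have huv : u ≠ v := fun hc => hE (Sym2.mk_isDiag_iff.mpr hc)
        have hiff := hω u v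
        have hAdj1 : (graphOf ω).Adj u v ↔ ω ⟨s(u,v), hE⟩ = true := by
          constructor
          · rintro ⟨h, hw⟩
            convert hw using 2
          · intro h; exact ⟨huv, by convert h using 2⟩
        have hfuv : f u ≠ f v := fun hc => huv (f.injective hc)
        have hE' : ¬ (s(f u, f v) : Sym2 (Fin n)).IsDiag :=
          fun hd => hfuv (Sym2.mk_isDiag_iff.mp hd)
        have hAdj2 : (graphOf ω).Adj (f u) (f v) ↔ ω ⟨s(f u, f v), hE'⟩ = true := by
          constructor
          · rintro ⟨h, hw⟩
            convert hw using 2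
          · intro h; exact ⟨hfuv, by convert h using 2⟩
        have hσe : σ ⟨s(u,v), hE⟩ = ⟨s(f u, f v), hE'⟩ := by
          rw [hσ, edgePerm_mk]
        rw [hσe]
        have : (ω ⟨s(f u, f v), hE'⟩ = true) ↔ (ω ⟨s(u,v), hE⟩ = true) := by
          rw [← hAdj1, ← hAdj2]; exact hiff
        cases h1 : ω ⟨s(f u, f v), hE'⟩ <;> cases h2 : ω ⟨s(u,v), hE⟩ <;> simp_all
      intro e
      obtain ⟨E, hE⟩ := e
      revert hE
      induction E using Sym2.ind with
      | _ u v => exact H u v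
    intro k
    exact key (a k)
  calc erMeasure n {ω : EdgeIdx n → Bool |
        ∀ u v, (graphOf ω).Adj (f u) (f v) ↔ (graphOf ω).Adj u v}
      ≤ erMeasure n {ω : EdgeIdx n → Bool | ∀ k, ω (a k) = ω (b k)} := measure_mono hsubset
    _ = (5/8 : ℝ≥0∞) ^ (Fintype.card {e // e ∈ D}) := pair_event_measure a b hinj
    _ ≤ (5/8 : ℝ≥0∞) ^ (f.support.card * ((n-2)/6)) := by
        rw [Fintype.card_coe]
        apply pow_le_pow_of_le_one zero_le (ENNReal.div_le_of_le_mul (by norm_num))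
        have h1 := nonfixed_count f
        rw [← hA] at h1
        have h2 : (n-2)/6*6 ≤ n-2 := Nat.div_mul_le_self _ _
        have h3 : f.support.card * ((n-2)/6) * 6 ≤ f.support.card * (n-2) := by
          rw [mul_assoc]
          exact Nat.mul_le_mul_left _ h2
        have h4 : f.support.card * (n-2) ≤ D.card * 6 := by omega
        exact Nat.le_of_mul_le_mul_right (h3.trans h4) (by norm_num)

lemma perm_count (n k : ℕ) :
    (Finset.univ.filter (fun f : Equiv.Perm (Fin n) => f.support.card = k)).card
      ≤ n ^ (2*k) := by
  classical
  rcases Finset.eq_empty_or_nonempty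
    (Finset.univ.filter (fun f : Equiv.Perm (Fin n) => f.support.card = k)) with he | hne
  · rw [he]; simp
  · have hnon : Nonempty ((Fin k → Fin n) × (Fin k → Fin n)) := by
      obtain ⟨f, hf⟩ := hne
      rw [Finset.mem_filter] at hf
      rcases Nat.eq_zero_or_pos k with rfl | hk
      · exact ⟨⟨fun i => i.elim0, fun i => i.elim0⟩⟩
      · have hpos : 0 < n := by
          have : 0 < f.support.card := hf.2 ▸ hk
          obtain ⟨x, _⟩ := Finset.card_pos.mp this
          exact x.pos
        exact ⟨⟨fun _ => ⟨0, hpos⟩, fun _ => ⟨0, hpos⟩⟩⟩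
    set Φ : Equiv.Perm (Fin n) → (Fin k → Fin n) × (Fin k → Fin n) := fun f =>
      if h : f.support.card = k then
        (fun i => ((f.support.orderIsoOfFin h) i : Fin n),
         fun i => f ((f.support.orderIsoOfFin h) i))
      else Classical.arbitrary _ with hΦ
    have hsupp : ∀ (f : Equiv.Perm (Fin n)) (h : f.support.card = k),
        f.support = Finset.univ.image (fun i => ((f.support.orderIsoOfFin h) i : Fin n)) := by
      intro f h
      ext x
      simp only [Finset.mem_image, Finset.mem_univ, true_and]
      constructor
      · intro hx
        obtain ⟨i, hi⟩ := (f.support.orderIsoOfFin h).surjective ⟨x, hx⟩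
        exact ⟨i, by rw [hi]⟩
      · rintro ⟨i, rfl⟩
        exact ((f.support.orderIsoOfFin h) i).2
    have hinj : Set.InjOn Φ
        (Finset.univ.filter (fun f : Equiv.Perm (Fin n) => f.support.card = k)) := by
      intro f hf g hg hfg
      rw [Finset.coe_filter, Set.mem_setOf_eq] at hf hg
      have hf2 := hf.2
      have hg2 := hg.2
      rw [hΦ] at hfg
      simp only [dif_pos hf2, dif_pos hg2, Prod.mk.injEq] at hfg
      obtain ⟨h1, h2⟩ := hfg
      have hse : f.support = g.support := by
        rw [hsupp f hf2, hsupp g hg2, h1]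
      apply Equiv.ext
      intro x
      by_cases hx : x ∈ f.support
      · obtain ⟨i, hi⟩ := (f.support.orderIsoOfFin hf2).surjective ⟨x, hx⟩
        have hxv : ((f.support.orderIsoOfFin hf2) i : Fin n) = x := by rw [hi]
        have e1 := congrFun h1 i
        have e2 := congrFun h2 i
        rw [hxv] at e2
        rw [e2, ← hxv, e1]
      · have hx' : x ∉ g.support := hse ▸ hx
        rw [Equiv.Perm.notMem_support.mp hx, Equiv.Perm.notMem_support.mp hx']
    have hcard := Finset.card_le_card_of_injOn Φ (fun f _ => Finset.mem_univ _) hinj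
    calc (Finset.univ.filter (fun f : Equiv.Perm (Fin n) => f.support.card = k)).card
        ≤ (Finset.univ : Finset ((Fin k → Fin n) × (Fin k → Fin n))).card := hcard
      _ = n ^ (2*k) := by
          rw [Finset.card_univ, Fintype.card_prod, Fintype.card_fun, Fintype.card_fin,
            Fintype.card_fin, two_mul, pow_add]

lemma union_bound (n : ℕ) :
    erMeasure n {ω : EdgeIdx n → Bool |
      ∃ f : Equiv.Perm (Fin n), f ≠ Equiv.refl (Fin n) ∧
        ∀ u v, (graphOf ω).Adj (f u) (f v) ↔ (graphOf ω).Adj u v}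
    ≤ ∑ k ∈ Finset.range (n+1),
        ((Finset.univ.filter
            (fun f : Equiv.Perm (Fin n) => f ≠ 1 ∧ f.support.card = k)).card : ℝ≥0∞)
          * ((5/8 : ℝ≥0∞) ^ ((n-2)/6)) ^ k := by
  classical
  have hsub : {ω : EdgeIdx n → Bool |
      ∃ f : Equiv.Perm (Fin n), f ≠ Equiv.refl (Fin n) ∧
        ∀ u v, (graphOf ω).Adj (f u) (f v) ↔ (graphOf ω).Adj u v}
      ⊆ ⋃ f ∈ Finset.univ.filter (fun f : Equiv.Perm (Fin n) => f ≠ 1),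
          {ω : EdgeIdx n → Bool |
            ∀ u v, (graphOf ω).Adj (f u) (f v) ↔ (graphOf ω).Adj u v} := by
    rintro ω ⟨f, hf, hfω⟩
    exact Set.mem_biUnion (Finset.mem_filter.mpr ⟨Finset.mem_univ _, hf⟩) hfω
  refine (measure_mono hsub).trans ?_
  refine (measure_biUnion_finset_le _ _).trans ?_
  have hstep : ∑ f ∈ Finset.univ.filter (fun f : Equiv.Perm (Fin n) => f ≠ 1),
      erMeasure n {ω : EdgeIdx n → Bool |
        ∀ u v, (graphOf ω).Adj (f u) (f v) ↔ (graphOf ω).Adj u v}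
      ≤ ∑ f ∈ Finset.univ.filter (fun f : Equiv.Perm (Fin n) => f ≠ 1),
          (5/8 : ℝ≥0∞) ^ (f.support.card * ((n-2)/6)) :=
    Finset.sum_le_sum (fun f _ => aut_measure_le f)
  refine hstep.trans ?_
  rw [← Finset.sum_fiberwise_of_maps_to
    (g := fun f : Equiv.Perm (Fin n) => f.support.card) (t := Finset.range (n+1))
    (fun f _ => Finset.mem_range.mpr (Nat.lt_succ_of_le (f.support.card_le_univ.trans
      (le_of_eq (Fintype.card_fin n)))))]
  refine Finset.sum_le_sum fun k _ => ?_
  have heq : ∑ f ∈ (Finset.univ.filter (fun f : Equiv.Perm (Fin n) => f ≠ 1)).filter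
        (fun f => f.support.card = k), (5/8 : ℝ≥0∞) ^ (f.support.card * ((n-2)/6))
      = ∑ f ∈ (Finset.univ.filter (fun f : Equiv.Perm (Fin n) => f ≠ 1)).filter
        (fun f => f.support.card = k), (5/8 : ℝ≥0∞) ^ (k * ((n-2)/6)) := by
    refine Finset.sum_congr rfl fun f hf => ?_
    rw [(Finset.mem_filter.mp hf).2]
  rw [heq, Finset.sum_const, nsmul_eq_mul, Finset.filter_filter]
  have hpow : (5/8 : ℝ≥0∞) ^ (k * ((n-2)/6)) = ((5/8 : ℝ≥0∞) ^ ((n-2)/6)) ^ k := by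
    rw [← pow_mul, mul_comm]
  rw [hpow]

lemma sum_bound (n : ℕ) (hx : ((n:ℝ≥0∞))^2 * (5/8 : ℝ≥0∞)^((n-2)/6) ≤ 1) :
    ∑ k ∈ Finset.range (n+1),
        ((Finset.univ.filter
            (fun f : Equiv.Perm (Fin n) => f ≠ 1 ∧ f.support.card = k)).card : ℝ≥0∞)
          * ((5/8 : ℝ≥0∞) ^ ((n-2)/6)) ^ k
      ≤ ((n:ℝ≥0∞)+1) * (((n:ℝ≥0∞))^2 * (5/8 : ℝ≥0∞)^((n-2)/6))^2 := by
  classical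
  set x : ℝ≥0∞ := ((n:ℝ≥0∞))^2 * (5/8 : ℝ≥0∞)^((n-2)/6) with hxdef
  have hterm : ∀ k ∈ Finset.range (n+1),
      ((Finset.univ.filter
          (fun f : Equiv.Perm (Fin n) => f ≠ 1 ∧ f.support.card = k)).card : ℝ≥0∞)
        * ((5/8 : ℝ≥0∞) ^ ((n-2)/6)) ^ k ≤ x^2 := by
    intro k _
    by_cases hk : k ≤ 1
    · have hempty : (Finset.univ.filter
          (fun f : Equiv.Perm (Fin n) => f ≠ 1 ∧ f.support.card = k)) = ∅ := by
        rw [Finset.filter_eq_empty_iff]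
        rintro f _ ⟨hf1, hfk⟩
        have := Equiv.Perm.one_lt_card_support_of_ne_one hf1
        omega
      rw [hempty]
      simp
    · push_neg at hk
      have hcount : ((Finset.univ.filter
            (fun f : Equiv.Perm (Fin n) => f ≠ 1 ∧ f.support.card = k)).card : ℝ≥0∞)
          ≤ ((n:ℝ≥0∞))^(2*k) := by
        have h1 : (Finset.univ.filter
              (fun f : Equiv.Perm (Fin n) => f ≠ 1 ∧ f.support.card = k))
            ⊆ (Finset.univ.filter (fun f : Equiv.Perm (Fin n) => f.support.card = k)) :=
          Finset.filter_subset_filter _ (fun f hf => hf) |>.trans (by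
            intro f hf
            rw [Finset.mem_filter] at hf ⊢
            exact ⟨hf.1, hf.2.2⟩)
        have h2 := (Finset.card_le_card h1).trans (perm_count n k)
        exact_mod_cast Nat.cast_le.mpr h2
      calc ((Finset.univ.filter
            (fun f : Equiv.Perm (Fin n) => f ≠ 1 ∧ f.support.card = k)).card : ℝ≥0∞)
          * ((5/8 : ℝ≥0∞) ^ ((n-2)/6)) ^ k
          ≤ ((n:ℝ≥0∞))^(2*k) * ((5/8 : ℝ≥0∞) ^ ((n-2)/6)) ^ k :=
            mul_le_mul_left hcount _
        _ = x ^ k := by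
            rw [hxdef, mul_pow, ← pow_mul, pow_mul]
        _ ≤ x^2 := pow_le_pow_of_le_one zero_le hx hk
  calc ∑ k ∈ Finset.range (n+1),
        ((Finset.univ.filter
            (fun f : Equiv.Perm (Fin n) => f ≠ 1 ∧ f.support.card = k)).card : ℝ≥0∞)
          * ((5/8 : ℝ≥0∞) ^ ((n-2)/6)) ^ k
      ≤ (Finset.range (n+1)).card • x^2 := Finset.sum_le_card_nsmul _ _ _ hterm
    _ = ((n:ℝ≥0∞)+1) * x^2 := by
        rw [Finset.card_range, nsmul_eq_mul]
        push_cast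
        ring

lemma aux_tendsto (c : ℕ) :
    Tendsto (fun n : ℕ => ((n:ℝ≥0∞)+1)^c * (5/8 : ℝ≥0∞)^((n-2)/6)) atTop (nhds 0) := by
  -- the decay exponent tends to infinity
  have hd : Tendsto (fun n : ℕ => (n-2)/6) atTop atTop := by
    rw [tendsto_atTop_atTop]
    intro b
    exact ⟨6*b+8, fun n hn => by omega⟩
  -- geometric decay beats polynomial growth, in ℝ≥0∞
  have hg : Tendsto (fun m : ℕ => (9:ℝ≥0∞)^c * ((m:ℝ≥0∞)+1)^c * (5/8 : ℝ≥0∞)^m)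
      atTop (nhds 0) := by
    have hco : ∀ m : ℕ, (9:ℝ≥0∞)^c * ((m:ℝ≥0∞)+1)^c * (5/8 : ℝ≥0∞)^m
        = (((9:ℝ≥0)^c * ((m:ℝ≥0)+1)^c * (5/8 : ℝ≥0)^m : ℝ≥0) : ℝ≥0∞) := by
      intro m
      have h58 : (5/8 : ℝ≥0∞) = ((5/8 : ℝ≥0) : ℝ≥0∞) := by
        rw [ENNReal.coe_div (by norm_num)]; norm_num
      rw [h58]
      push_cast
      ring
    simp only [hco]
    rw [← ENNReal.coe_zero, ENNReal.tendsto_coe, ← NNReal.tendsto_coe]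
    have hre : Tendsto (fun m : ℕ => (m:ℝ)^c * (5/8 : ℝ)^m) atTop (nhds 0) :=
      tendsto_pow_const_mul_const_pow_of_lt_one c (by norm_num) (by norm_num)
    have hre1 : Tendsto (fun m : ℕ => ((m+1:ℕ):ℝ)^c * (5/8 : ℝ)^(m+1)) atTop (nhds 0) :=
      hre.comp (tendsto_add_atTop_nat 1)
    have hre2 := hre1.const_mul ((9:ℝ)^c * (8/5))
    rw [mul_zero] at hre2
    rw [NNReal.coe_zero]
    convert hre2 using 2 with m
    push_cast
    rw [pow_succ]
    ring
  -- comparison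
  have hcomp : ∀ n : ℕ, ((n:ℝ≥0∞)+1)^c * (5/8 : ℝ≥0∞)^((n-2)/6)
      ≤ (9:ℝ≥0∞)^c * (((((n-2)/6 : ℕ)):ℝ≥0∞)+1)^c * (5/8 : ℝ≥0∞)^((n-2)/6) := by
    intro n
    have hnat : (n + 1 : ℕ) ≤ 9 * ((n-2)/6 + 1) := by omega
    have hcast : ((n:ℝ≥0∞)+1) ≤ 9 * ((((n-2)/6 : ℕ)):ℝ≥0∞)+9 := by
      calc ((n:ℝ≥0∞)+1) = ((n+1 : ℕ) : ℝ≥0∞) := by push_cast; ring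
        _ ≤ ((9 * ((n-2)/6 + 1) : ℕ) : ℝ≥0∞) := by exact_mod_cast Nat.cast_le.mpr hnat
        _ = 9 * ((((n-2)/6 : ℕ)):ℝ≥0∞)+9 := by push_cast; ring
    refine mul_le_mul_left ?_ _
    calc ((n:ℝ≥0∞)+1)^c ≤ (9 * ((((n-2)/6 : ℕ)):ℝ≥0∞)+9)^c := pow_le_pow_left' hcast c
      _ = (9:ℝ≥0∞)^c * (((((n-2)/6 : ℕ)):ℝ≥0∞)+1)^c := by
          rw [← mul_pow]
          congr 1
          ring
  exact tendsto_of_tendsto_of_tendsto_of_le_of_le tendsto_const_nhds (hg.comp hd)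
    (fun n => zero_le) hcomp

theorem er_asymmetric_whp :
    Tendsto (fun n : ℕ => erMeasure n {ω : EdgeIdx n → Bool |
      ∃ f : Equiv.Perm (Fin n), f ≠ Equiv.refl (Fin n) ∧
        ∀ u v, (graphOf ω).Adj (f u) (f v) ↔ (graphOf ω).Adj u v})
      atTop (nhds 0) := by
  have h2 := aux_tendsto 2
  have h5 := aux_tendsto 5
  have hθ1 : ∀ n : ℕ, (5/8 : ℝ≥0∞)^((n-2)/6) ≤ 1 :=
    fun n => pow_le_one' (ENNReal.div_le_of_le_mul (by norm_num)) _
  have hxev : ∀ᶠ n : ℕ in atTop, ((n:ℝ≥0∞))^2 * (5/8 : ℝ≥0∞)^((n-2)/6) ≤ 1 := by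
    have hlt := h2.eventually_lt_const (by norm_num : (0:ℝ≥0∞) < 1)
    filter_upwards [hlt] with n hn
    refine le_of_lt (lt_of_le_of_lt ?_ hn)
    exact mul_le_mul_left (pow_le_pow_left' (le_add_right le_rfl) 2) _
  refine tendsto_of_tendsto_of_tendsto_of_le_of_le' tendsto_const_nhds h5
    (Eventually.of_forall fun n => zero_le) ?_
  filter_upwards [hxev] with n hx
  calc erMeasure n {ω : EdgeIdx n → Bool |
      ∃ f : Equiv.Perm (Fin n), f ≠ Equiv.refl (Fin n) ∧
        ∀ u v, (graphOf ω).Adj (f u) (f v) ↔ (graphOf ω).Adj u v}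
      ≤ ∑ k ∈ Finset.range (n+1),
        ((Finset.univ.filter
            (fun f : Equiv.Perm (Fin n) => f ≠ 1 ∧ f.support.card = k)).card : ℝ≥0∞)
          * ((5/8 : ℝ≥0∞) ^ ((n-2)/6)) ^ k := union_bound n
    _ ≤ ((n:ℝ≥0∞)+1) * (((n:ℝ≥0∞))^2 * (5/8 : ℝ≥0∞)^((n-2)/6))^2 := sum_bound n hx
    _ ≤ ((n:ℝ≥0∞)+1)^5 * (5/8 : ℝ≥0∞)^((n-2)/6) := by
        have hstep : (((n:ℝ≥0∞))^2 * (5/8 : ℝ≥0∞)^((n-2)/6))^2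
            ≤ ((n:ℝ≥0∞)+1)^4 * (5/8 : ℝ≥0∞)^((n-2)/6) := by
          rw [mul_pow]
          refine mul_le_mul ?_ ?_ zero_le zero_le
          · have : ((n:ℝ≥0∞)^2)^2 = (n:ℝ≥0∞)^4 := by ring
            rw [this]
            exact pow_le_pow_left' (le_add_right le_rfl) 4
          · calc ((5/8 : ℝ≥0∞)^((n-2)/6))^2 ≤ ((5/8 : ℝ≥0∞)^((n-2)/6))^1 :=
                pow_le_pow_of_le_one zero_le (hθ1 n) (by norm_num)
              _ = (5/8 : ℝ≥0∞)^((n-2)/6) := pow_one _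
        calc ((n:ℝ≥0∞)+1) * (((n:ℝ≥0∞))^2 * (5/8 : ℝ≥0∞)^((n-2)/6))^2
            ≤ ((n:ℝ≥0∞)+1) * (((n:ℝ≥0∞)+1)^4 * (5/8 : ℝ≥0∞)^((n-2)/6)) :=
              mul_le_mul_right hstep _
          _ = ((n:ℝ≥0∞)+1)^5 * (5/8 : ℝ≥0∞)^((n-2)/6) := by ring
end

section
/- Suppose a graph G on n vertices has the property that every vertex has degree at least d and every pair of distinct vertices has at most s common neighbors, where d > s. Then every non-identity automorphism f of G moves at least d − s vertices. -/
theorem automorphism_moves_many_vertices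
    {V : Type*} [Fintype V] [DecidableEq V] (G : SimpleGraph V) (d s : ℕ) (hds : s < d)
    (hdeg : ∀ v : V, d ≤ (G.neighborSet v).ncard)
    (hcod : ∀ x y : V, x ≠ y → (G.commonNeighbors x y).ncard ≤ s)
    (f : Equiv.Perm V) (hf : ∀ u v, G.Adj (f u) (f v) ↔ G.Adj u v)
    (hne : f ≠ Equiv.refl V) :
    d - s ≤ (Finset.univ.filter fun v : V => f v ≠ v).card := by
  classical
  obtain ⟨x, hx⟩ : ∃ x : V, f x ≠ x := by
    by_contra h
    push_neg at h
    exact hne (Equiv.ext fun v => h v)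
  have hxy : x ≠ f x := fun h => hx h.symm
  set A := G.neighborSet x with hA
  set B := G.commonNeighbors x (f x) with hB
  have hsub : A \ B ⊆ {v : V | f v ≠ v} := by
    intro v hv
    rcases hv with ⟨hvA, hvB⟩
    intro hfv
    apply hvB
    constructor
    · exact hvA
    · have : G.Adj (f x) (f v) := (hf x v).2 hvA
      rw [hfv] at this
      exact this
  have hAfin : A.Finite := Set.toFinite _
  have h1 : A.ncard ≤ (A \ B).ncard + B.ncard :=
    Set.ncard_le_ncard_diff_add_ncard A B (Set.toFinite _)
  have h3 : (A \ B).ncard ≤ {v : V | f v ≠ v}.ncard :=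
    Set.ncard_le_ncard hsub (Set.toFinite _)
  have h4 : {v : V | f v ≠ v}.ncard = (Finset.univ.filter fun v : V => f v ≠ v).card := by
    rw [Set.ncard_eq_toFinset_card']
    congr 1
    ext v
    simp
  have hd := hdeg x
  have hs := hcod x (f x) hxy
  rw [← hA] at hd
  rw [← hB] at hs
  omega
end

section
/- The probability that the random mixed graph X(n, 1/2) is self-converse tends to zero as n → ∞. -/
open MeasureTheory Filter
open scoped ENNReal

structure MixedGraph (V : Type*) where
  edge : V → V → Prop
  arc : V → V → Prop
  edge_symm : ∀ u v, edge u v → edge v u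
  edge_irrefl : ∀ v, ¬ edge v v
  arc_antisymm : ∀ u v, arc u v → ¬ arc v u
  arc_edge_disjoint : ∀ u v, arc u v → ¬ edge u v

def MixedGraph.converse {V : Type*} (X : MixedGraph V) : MixedGraph V where
  edge := X.edge
  arc u v := X.arc v u
  edge_symm := X.edge_symm
  edge_irrefl := X.edge_irrefl
  arc_antisymm u v h h' := X.arc_antisymm v u h h'
  arc_edge_disjoint u v h he := X.arc_edge_disjoint v u h (X.edge_symm u v he)

def IsMixedIso {V W : Type*} (f : V ≃ W) (X : MixedGraph V) (Y : MixedGraph W) : Prop :=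
  (∀ u v, X.edge u v ↔ Y.edge (f u) (f v)) ∧ (∀ u v, X.arc u v ↔ Y.arc (f u) (f v))

def MixedGraph.SelfConverse {V : Type*} (X : MixedGraph V) : Prop :=
  ∃ f : V ≃ V, IsMixedIso f X X.converse

def MixedGraph.symGraph {V : Type*} (X : MixedGraph V) : SimpleGraph V where
  Adj := X.edge
  symm := ⟨fun u v => X.edge_symm u v⟩
  loopless := ⟨X.edge_irrefl⟩

noncomputable def mixedMeasure (n : ℕ) : Measure ((Fin n × Fin n) → Bool) :=
  Measure.pi fun _ => (PMF.bernoulli (1/2) (by norm_num)).toMeasure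

def mixedOf {n : ℕ} (ω : Fin n × Fin n → Bool) : MixedGraph (Fin n) where
  edge u v := u ≠ v ∧ ω (u,v) = true ∧ ω (v,u) = true
  arc u v := u ≠ v ∧ ω (u,v) = true ∧ ω (v,u) = false
  edge_symm := by tauto
  edge_irrefl := by tauto
  arc_antisymm := by rintro u v ⟨_, _, h⟩ ⟨_, h', _⟩; simp [h] at h'
  arc_edge_disjoint := by rintro u v ⟨_, _, h⟩ ⟨_, _, h'⟩; simp [h] at h'



section InvCount
variable {α : Type*} [Fintype α] [DecidableEq α]
open MulAction

theorem two_mul_card_quot_le (g : Equiv.Perm α) :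
    2 * Nat.card (Quotient (orbitRel (Subgroup.zpowers g) α)) ≤
      Fintype.card α + Nat.card {x : α // g x = x} := by
  classical
  rw [Nat.card_eq_fintype_card, Nat.card_eq_fintype_card]
  set Q := Quotient (orbitRel (Subgroup.zpowers g) α) with hQ
  set fib : Q → Finset α := fun c => Finset.univ.filter
      (fun x : α => (Quotient.mk _ x : Q) = c) with hfibdef
  have hfib : Fintype.card α = ∑ c : Q, (fib c).card :=
    Finset.card_eq_sum_card_fiberwise (fun x _ => Finset.mem_univ _)
  have hone : ∀ c : Q, 1 ≤ (fib c).card := by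
    intro c
    induction c using Quotient.inductionOn with
    | h x =>
      refine Finset.card_pos.mpr ⟨x, ?_⟩
      simp only [hfibdef, Finset.mem_filter, Finset.mem_univ, true_and]
  have hrel : ∀ x : α, (Quotient.mk _ (g x) : Q) = Quotient.mk _ x := by
    intro x
    refine Quotient.sound ?_
    refine (orbitRel_apply).mpr (mem_orbit_iff.mpr ⟨⟨g, Subgroup.mem_zpowers g⟩, rfl⟩)
  set N : Finset α := Finset.univ.filter (fun x => g x = x) with hN
  set T : Finset Q := Finset.univ.filter (fun c => (fib c).card = 1) with hT
  have hTN : T ⊆ N.image (Quotient.mk _) := by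
    intro c hc
    rw [hT, Finset.mem_filter] at hc
    obtain ⟨x, hx⟩ := Finset.card_eq_one.mp hc.2
    have hxmem : x ∈ fib c := by rw [hx]; exact Finset.mem_singleton_self x
    have hxc : (Quotient.mk _ x : Q) = c := by
      simpa [hfibdef] using hxmem
    have hgx : g x ∈ fib c := by
      simp [hfibdef, hrel x, hxc]
    have : g x = x := by
      rw [hx] at hgx; exact Finset.mem_singleton.mp hgx
    exact Finset.mem_image.mpr ⟨x, by simp [hN, this], hxc⟩
  have hTcard : T.card ≤ N.card := le_trans (Finset.card_le_card hTN) Finset.card_image_le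
  have key : ∀ c : Q, 2 ≤ (fib c).card + (if c ∈ T then 1 else 0) := by
    intro c
    by_cases h : (fib c).card = 1
    · have : c ∈ T := by simp [hT, h]
      simp [this, h]
    · have : 2 ≤ (fib c).card := by
        have := hone c
        omega
      omega
  have hmain : 2 * Fintype.card Q ≤ ∑ c : Q, ((fib c).card + (if c ∈ T then 1 else 0)) := by
    calc 2 * Fintype.card Q = ∑ _c : Q, 2 := by
          rw [Finset.sum_const, smul_eq_mul, Finset.card_univ, mul_comm]
      _ ≤ _ := Finset.sum_le_sum (fun c _ => key c)
  have hsplit : ∑ c : Q, ((fib c).card + (if c ∈ T then 1 else 0))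
      = Fintype.card α + T.card := by
    rw [Finset.sum_add_distrib, ← hfib]
    congr 1
    rw [Finset.sum_ite_mem, Finset.univ_inter, Finset.sum_const, smul_eq_mul, mul_one]
  have hNcard : N.card = Fintype.card {x : α // g x = x} := (Fintype.card_subtype _).symm
  have hQQ : Fintype.card (Quotient (orbitRel (Subgroup.zpowers g) α)) = Fintype.card Q := rfl
  omega

omit [Fintype α] [DecidableEq α] in
theorem invariant_const_on_orbits (g : Equiv.Perm α) (ω : α → Bool)
    (hω : ∀ x, ω (g x) = ω x) :
    ∀ x y, (orbitRel (Subgroup.zpowers g) α) x y → ω x = ω y := by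
  have hnat : ∀ (m : ℕ) (y : α), ω ((g ^ m) y) = ω y := by
    intro m
    induction m with
    | zero => intro y; simp
    | succ m ih =>
      intro y
      have : (g ^ (m+1)) y = (g ^ m) (g y) := by
        rw [pow_succ]; rfl
      rw [this, ih (g y), hω y]
  have hint : ∀ (k : ℤ) (y : α), ω ((g ^ k) y) = ω y := by
    intro k y
    cases k with
    | ofNat m => rw [Int.ofNat_eq_coe, zpow_natCast]; exact hnat m y
    | negSucc m =>
      have h1 : (g ^ (m + 1)) ((g ^ Int.negSucc m) y) = y := by
        have hadd : ((m : ℤ) + 1) + Int.negSucc m = 0 := by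
          simp [Int.negSucc_eq]
        have hmul : g ^ ((m : ℤ) + 1) * g ^ Int.negSucc m = 1 := by
          rw [← zpow_add, hadd, zpow_zero]
        have hcast : g ^ ((m : ℤ) + 1) = g ^ (m + 1) := by
          rw [← zpow_natCast]; norm_num
        calc (g ^ (m + 1)) ((g ^ Int.negSucc m) y)
            = (g ^ ((m : ℤ) + 1) * g ^ Int.negSucc m) y := by rw [hcast]; rfl
          _ = y := by rw [hmul]; rfl
      have h2 := hnat (m + 1) ((g ^ Int.negSucc m) y)
      rw [h1] at h2
      exact h2.symm
  intro x y hrel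
  obtain ⟨m, hm⟩ := MulAction.mem_orbit_iff.mp (MulAction.orbitRel_apply.mp hrel)
  obtain ⟨k, hk⟩ := Subgroup.mem_zpowers_iff.mp m.2
  have : (g ^ k) y = x := by
    rw [← hm, Subgroup.smul_def, ← hk]
    rfl
  rw [← this, hint k y]

omit [DecidableEq α] in
theorem card_invariant_le (g : Equiv.Perm α) :
    Nat.card {ω : α → Bool // ∀ x, ω (g x) = ω x} ≤
      2 ^ Nat.card (Quotient (orbitRel (Subgroup.zpowers g) α)) := by
  classical
  have hinj : Function.Injective
      (fun ω : {ω : α → Bool // ∀ x, ω (g x) = ω x} =>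
        (Quotient.lift ω.1 (fun a b hab => invariant_const_on_orbits g ω.1 ω.2 a b hab) :
          Quotient (orbitRel (Subgroup.zpowers g) α) → Bool)) := by
    intro ω ω' hh
    ext x
    have := congrFun hh (Quotient.mk _ x)
    simpa using this
  calc Nat.card {ω : α → Bool // ∀ x, ω (g x) = ω x}
      ≤ Nat.card (Quotient (orbitRel (Subgroup.zpowers g) α) → Bool) :=
        Nat.card_le_card_of_injective _ hinj
    _ = 2 ^ Nat.card (Quotient (orbitRel (Subgroup.zpowers g) α)) := by
        rw [Nat.card_fun]
        simp

end InvCount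

section Spec
open MulAction
variable {n : ℕ}

theorem card_S_le (n : ℕ) (f : Equiv.Perm (Fin n)) :
    Nat.card {ω : Fin n × Fin n → Bool // ∀ u v : Fin n, u ≠ v → ω (f u, f v) = ω (v, u)} ≤
      2 ^ (n * n / 2) * 2 ^ n := by
  classical
  set h : Equiv.Perm (Fin n × Fin n) := (Equiv.prodComm _ _).trans (f.prodCongr f) with hh
  have happ : ∀ p : Fin n × Fin n, h p = (f p.2, f p.1) := fun p => rfl
  have hpred : ∀ p : Fin n × Fin n, p.1 ≠ p.2 ↔ (h p).1 ≠ (h p).2 := by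
    intro p
    rw [happ]
    constructor
    · exact fun hne he => hne (f.injective he).symm
    · exact fun hne he => hne (by rw [he])
  set g : Equiv.Perm {p : Fin n × Fin n // p.1 ≠ p.2} := h.subtypePerm (fun p => (hpred p).symm) with hg
  have hgapp : ∀ x : {p : Fin n × Fin n // p.1 ≠ p.2}, (g x).1 = (f x.1.2, f x.1.1) :=
    fun x => rfl
  -- fixed points injection into Fin n
  have hfix : Nat.card {x : {p : Fin n × Fin n // p.1 ≠ p.2} // g x = x} ≤ n := by
    have : Function.Injective
        (fun x : {x : {p : Fin n × Fin n // p.1 ≠ p.2} // g x = x} => x.1.1.1) := by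
      intro x y hxy
      have hx : f x.1.1.1 = x.1.1.2 := by
        have := congrArg Prod.snd (congrArg Subtype.val x.2)
        simpa [hgapp] using this
      have hy : f y.1.1.1 = y.1.1.2 := by
        have := congrArg Prod.snd (congrArg Subtype.val y.2)
        simpa [hgapp] using this
      have h2 : x.1.1.2 = y.1.1.2 := by rw [← hx, ← hy]; exact congrArg f hxy
      exact Subtype.ext (Subtype.ext (Prod.ext hxy h2))
    calc Nat.card {x : {p : Fin n × Fin n // p.1 ≠ p.2} // g x = x}
        ≤ Nat.card (Fin n) := Nat.card_le_card_of_injective _ this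
      _ = n := Nat.card_eq_fintype_card.trans (Fintype.card_fin n)
  -- card of D
  have hDiag : Fintype.card {p : Fin n × Fin n // p.1 = p.2} = n := by
    have e : {p : Fin n × Fin n // p.1 = p.2} ≃ Fin n :=
      ⟨fun x => x.1.1, fun u => ⟨(u, u), rfl⟩, fun x => Subtype.ext (Prod.ext rfl x.2),
        fun u => rfl⟩
    rw [Fintype.card_congr e, Fintype.card_fin]
  have hD : Fintype.card {p : Fin n × Fin n // p.1 ≠ p.2} = n * n - n := by
    have := Fintype.card_subtype_compl (fun p : Fin n × Fin n => p.1 = p.2)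
    rw [hDiag] at this
    simpa [Fintype.card_prod, Fintype.card_fin] using this
  have hQ : Nat.card (Quotient (orbitRel (Subgroup.zpowers g)
      {p : Fin n × Fin n // p.1 ≠ p.2})) ≤ n * n / 2 := by
    have h2 := two_mul_card_quot_le g
    rw [hD] at h2
    have hnn : n ≤ n * n := by nlinarith
    rw [Nat.le_div_iff_mul_le (by norm_num)]
    omega
  -- main injection
  have hinvmem : ∀ ω : {ω : Fin n × Fin n → Bool //
      ∀ u v : Fin n, u ≠ v → ω (f u, f v) = ω (v, u)},
      ∀ x : {p : Fin n × Fin n // p.1 ≠ p.2}, ω.1 (g x).1 = ω.1 x.1 := by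
    intro ω x
    rw [hgapp]
    have := ω.2 x.1.2 x.1.1 (fun he => x.2 he.symm)
    simpa using this
  have hinj : Function.Injective
      (fun ω : {ω : Fin n × Fin n → Bool //
          ∀ u v : Fin n, u ≠ v → ω (f u, f v) = ω (v, u)} =>
        ((⟨fun x => ω.1 x.1, hinvmem ω⟩ :
            {ω' : {p : Fin n × Fin n // p.1 ≠ p.2} → Bool // ∀ x, ω' (g x) = ω' x}),
          fun u : Fin n => ω.1 (u, u))) := by
    intro ω ω' hh'
    have h1 := congrArg Prod.fst hh'
    have h2 := congrArg Prod.snd hh'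
    ext p
    by_cases hp : p.1 = p.2
    · have : ω.1 (p.1, p.1) = ω'.1 (p.1, p.1) := congrFun h2 p.1
      have hpp : p = (p.1, p.1) := Prod.ext rfl hp.symm
      rw [hpp]; exact this
    · have := congrFun (congrArg Subtype.val h1) ⟨p, hp⟩
      simpa using this
  calc Nat.card {ω : Fin n × Fin n → Bool // ∀ u v : Fin n, u ≠ v → ω (f u, f v) = ω (v, u)}
      ≤ Nat.card ({ω' : {p : Fin n × Fin n // p.1 ≠ p.2} → Bool // ∀ x, ω' (g x) = ω' x}
          × (Fin n → Bool)) := Nat.card_le_card_of_injective _ hinj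
    _ = Nat.card {ω' : {p : Fin n × Fin n // p.1 ≠ p.2} → Bool // ∀ x, ω' (g x) = ω' x}
          * 2 ^ n := by
        rw [Nat.card_prod]
        congr 1
        rw [Nat.card_fun]
        norm_num [Nat.card_eq_fintype_card]
    _ ≤ 2 ^ (n * n / 2) * 2 ^ n := by
        refine Nat.mul_le_mul_right _ ?_
        refine le_trans (card_invariant_le g) ?_
        exact Nat.pow_le_pow_right (by norm_num) hQ

end Spec

theorem iso_to_inv {n : ℕ} (f : Fin n ≃ Fin n) (ω : Fin n × Fin n → Bool)
    (hf : IsMixedIso f (mixedOf ω) (mixedOf ω).converse) :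
    ∀ u v : Fin n, u ≠ v → ω (f u, f v) = ω (v, u) := by
  obtain ⟨he, ha⟩ := hf
  intro u v huv
  have hvu : v ≠ u := huv.symm
  have hfuv : f u ≠ f v := fun h => huv (f.injective h)
  have hfvu : f v ≠ f u := hfuv.symm
  have h1 := he u v
  have h2 := ha u v
  have h3 := ha v u
  simp only [mixedOf, MixedGraph.converse] at h1 h2 h3
  cases h_uv : ω (u, v) <;> cases h_vu : ω (v, u) <;>
    cases h_fuv : ω (f u, f v) <;> cases h_fvu : ω (f v, f u) <;>
      simp_all

theorem mixedMeasure_singleton {n : ℕ} (ω : Fin n × Fin n → Bool) :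
    mixedMeasure n {ω} = (1 / 2 : ℝ≥0∞) ^ (n * n) := by
  have hset : ({ω} : Set (Fin n × Fin n → Bool)) = Set.pi Set.univ (fun i => {ω i}) := by
    ext x
    simp [Set.mem_pi, funext_iff, eq_comm]
  rw [mixedMeasure, hset, Measure.pi_pi]
  have hb : ∀ i : Fin n × Fin n,
      (PMF.bernoulli (1/2) (by norm_num)).toMeasure {ω i} = 1/2 := by
    intro i
    rw [PMF.toMeasure_apply_singleton _ _ (measurableSet_singleton _)]
    cases ω i <;> simp [PMF.bernoulli_apply]
  simp only [hb]
  rw [Finset.prod_const, Finset.card_univ, Fintype.card_prod, Fintype.card_fin]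

theorem fact_bound : ∀ n, 12 ≤ n → n.factorial * 8 ^ n ≤ 2 ^ (n * n / 2) := by
  have key : ∀ k : ℕ, 8 * (k + 13) ≤ 2 ^ (k + 12) := by
    intro k
    induction k with
    | zero => norm_num
    | succ k ih =>
      have h : 2 ^ (k + 1 + 12) = 2 ^ (k + 12) * 2 := by rw [← pow_succ]
      omega
  intro n hn
  induction n, hn using Nat.le_induction with
  | base => norm_num [Nat.factorial]
  | succ n hn ih =>
    have h8 : (n + 1) * 8 ≤ 2 ^ n := by
      have := key (n - 12)
      rw [Nat.sub_add_cancel hn] at this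
      have h2 : (n - 12) + 13 = n + 1 := by omega
      rw [h2] at this
      omega
    have hexp : (n + 1) * (n + 1) = n * n + 2 * n + 1 := by ring
    have hdiv : n + n * n / 2 ≤ (n + 1) * (n + 1) / 2 := by omega
    calc (n + 1).factorial * 8 ^ (n + 1) = ((n + 1) * 8) * (n.factorial * 8 ^ n) := by
          rw [Nat.factorial_succ, pow_succ]; ring
      _ ≤ 2 ^ n * 2 ^ (n * n / 2) := Nat.mul_le_mul h8 ih
      _ = 2 ^ (n + n * n / 2) := (pow_add 2 n (n * n / 2)).symm
      _ ≤ 2 ^ ((n + 1) * (n + 1) / 2) := Nat.pow_le_pow_right (by norm_num) hdiv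

theorem nat_main_bound : ∀ n, 12 ≤ n →
    (Nat.factorial n * (2 ^ (n * n / 2) * 2 ^ n)) * 4 ^ n ≤ 2 ^ (n * n) := by
  intro n hn
  have h1 : Nat.factorial n * (2 ^ (n * n / 2) * 2 ^ n) * 4 ^ n
      = (Nat.factorial n * 8 ^ n) * 2 ^ (n * n / 2) := by
    have : (8 : ℕ) ^ n = 2 ^ n * 4 ^ n := by
      rw [← Nat.mul_pow]
    rw [this]; ring
  rw [h1]
  calc (Nat.factorial n * 8 ^ n) * 2 ^ (n * n / 2)
      ≤ 2 ^ (n * n / 2) * 2 ^ (n * n / 2) := Nat.mul_le_mul_right _ (fact_bound n hn)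
    _ = 2 ^ (n * n / 2 + n * n / 2) := (pow_add 2 _ _).symm
    _ ≤ 2 ^ (n * n) := Nat.pow_le_pow_right (by norm_num) (by omega)

theorem measure_le (n : ℕ) :
    mixedMeasure n {ω : Fin n × Fin n → Bool | (mixedOf ω).SelfConverse} ≤
      ((Nat.factorial n * (2 ^ (n * n / 2) * 2 ^ n) : ℕ) : ℝ≥0∞) * (1 / 2 : ℝ≥0∞) ^ (n * n) := by
  classical
  have hsub : {ω : Fin n × Fin n → Bool | (mixedOf ω).SelfConverse} ⊆
      ⋃ f ∈ (Finset.univ : Finset (Equiv.Perm (Fin n))),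
        {ω : Fin n × Fin n → Bool | ∀ u v : Fin n, u ≠ v → ω (f u, f v) = ω (v, u)} := by
    rintro ω ⟨f, hf⟩
    exact Set.mem_biUnion (Finset.mem_univ (f : Equiv.Perm (Fin n))) (iso_to_inv f ω hf)
  refine le_trans (measure_mono hsub) (le_trans (measure_biUnion_finset_le _ _) ?_)
  have hone : ∀ f : Equiv.Perm (Fin n),
      mixedMeasure n {ω : Fin n × Fin n → Bool |
        ∀ u v : Fin n, u ≠ v → ω (f u, f v) = ω (v, u)} ≤
        ((2 ^ (n * n / 2) * 2 ^ n : ℕ) : ℝ≥0∞) * (1 / 2 : ℝ≥0∞) ^ (n * n) := by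
    intro f
    set t : Finset (Fin n × Fin n → Bool) :=
      Finset.univ.filter (fun ω => ∀ u v : Fin n, u ≠ v → ω (f u, f v) = ω (v, u)) with ht
    have hset : {ω : Fin n × Fin n → Bool | ∀ u v : Fin n, u ≠ v → ω (f u, f v) = ω (v, u)}
        = ⋃ ω ∈ t, {ω} := by
      ext ω; simp [ht]
    rw [hset]
    refine le_trans (measure_biUnion_finset_le _ _) ?_
    have hcard : t.card ≤ 2 ^ (n * n / 2) * 2 ^ n := by
      have := card_S_le n f
      rwa [Nat.card_eq_fintype_card, Fintype.card_subtype] at this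
    calc ∑ ω ∈ t, mixedMeasure n {ω}
        = ∑ _ω ∈ t, (1 / 2 : ℝ≥0∞) ^ (n * n) :=
          Finset.sum_congr rfl (fun ω _ => mixedMeasure_singleton ω)
      _ = (t.card : ℝ≥0∞) * (1 / 2 : ℝ≥0∞) ^ (n * n) := by
          rw [Finset.sum_const, nsmul_eq_mul]
      _ ≤ ((2 ^ (n * n / 2) * 2 ^ n : ℕ) : ℝ≥0∞) * (1 / 2 : ℝ≥0∞) ^ (n * n) :=
          mul_le_mul_left (by exact_mod_cast hcard) _
  refine le_trans (Finset.sum_le_sum (fun f _ => hone f)) (le_of_eq ?_)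
  rw [Finset.sum_const, Finset.card_univ, Fintype.card_perm, Fintype.card_fin, nsmul_eq_mul]
  push_cast
  ring

theorem final_eventually : ∀ᶠ n in atTop, mixedMeasure n
    {ω : Fin n × Fin n → Bool | (mixedOf ω).SelfConverse} ≤ ((1 : ℝ≥0∞) / 4) ^ n := by
  filter_upwards [eventually_ge_atTop 12] with n hn
  have h1 := measure_le n
  have h2 := nat_main_bound n hn
  have h4 : (4 : ℝ≥0∞) ^ n ≠ 0 := pow_ne_zero _ (by norm_num)
  have h4' : (4 : ℝ≥0∞) ^ n ≠ ⊤ := ENNReal.pow_ne_top (by norm_num)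
  rw [← ENNReal.mul_le_mul_iff_left h4 h4']
  have hq : ((1 : ℝ≥0∞) / 4) ^ n * 4 ^ n = 1 := by
    rw [← mul_pow, ENNReal.div_mul_cancel (by norm_num) (by norm_num), one_pow]
  rw [hq]
  have hhalf : (2 : ℝ≥0∞) * (1 / 2) = 1 := by
    rw [one_div, ENNReal.mul_inv_cancel (by norm_num) (by norm_num)]
  calc mixedMeasure n {ω : Fin n × Fin n → Bool | (mixedOf ω).SelfConverse} * 4 ^ n
      ≤ (((Nat.factorial n * (2 ^ (n * n / 2) * 2 ^ n) : ℕ) : ℝ≥0∞)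
          * (1 / 2 : ℝ≥0∞) ^ (n * n)) * 4 ^ n := mul_le_mul_left h1 _
    _ = ((Nat.factorial n * (2 ^ (n * n / 2) * 2 ^ n) * 4 ^ n : ℕ) : ℝ≥0∞)
          * (1 / 2 : ℝ≥0∞) ^ (n * n) := by push_cast; ring
    _ ≤ ((2 ^ (n * n) : ℕ) : ℝ≥0∞) * (1 / 2 : ℝ≥0∞) ^ (n * n) :=
          mul_le_mul_left (by exact_mod_cast h2) _
    _ = 1 := by
          push_cast
          rw [← mul_pow, hhalf, one_pow]


theorem random_mixed_graph_selfConverse_tendsto_zero :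
    Tendsto (fun n : ℕ => mixedMeasure n
      {ω : Fin n × Fin n → Bool | (mixedOf ω).SelfConverse}) atTop (nhds 0) := by
  have hlt : ((1 : ℝ≥0∞) / 4) < 1 := by
    rw [one_div]
    exact ENNReal.inv_lt_one.mpr (by norm_num)
  refine tendsto_of_tendsto_of_tendsto_of_le_of_le' tendsto_const_nhds
    (ENNReal.tendsto_pow_atTop_nhds_zero_of_lt_one hlt) ?_ final_eventually
  exact Eventually.of_forall (fun n => zero_le)
end
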